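/- arXiv:2109.11098 — 2 statements merged into one kernel-verified Lean document; each statement's English description precedes it below -/
import Mathlib

section
/- Let c : ℝ → ℝ be continuously differentiable with c(x) > 0 for all x, let τ : ℝ → ℝ be twice continuously differentiable with τ'(x) = √(c(x)) for all x, and let u : ℝ × ℝ → ℝ be twice continuously differentiable and satisfy c(x)·∂ₜₜu(x,t) = ∂ₓₓu(x,t) for all (x,t) ∈ ℝ². Define q(x,t) = u(x, t + τ(x)). Then q is twice continuously differentiable and for all (x,t) ∈ ℝ²: ∂ₓₓq(x,t) − 2·τ'(x)·∂ₜ∂ₓq(x,t) − τ''(x)·∂ₜq(x,t) = 0. -/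
private lemma clm_slant {F : Type*} [NormedAddCommGroup F] [NormedSpace ℝ F]
    (L : ℝ × ℝ →L[ℝ] F) (d : ℝ) : L (1, d) = L (1, 0) + d • L (0, 1) := by
  have h : ((1 : ℝ), d) = ((1 : ℝ), 0) + d • ((0 : ℝ), (1 : ℝ)) := by
    simp [Prod.ext_iff]
  rw [h, map_add, map_smul]

set_option maxHeartbeats 1000000 in
/-- Equation (3.3): if `τ' = √c` and `c·u_tt = u_xx`, then the travel-time change of
variables `q(x,t) = u(x, t + τ(x))` is `C²` and satisfies
`q_xx − 2τ'·q_xt − τ''·q_t = 0`. -/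
theorem travel_time_change_of_variables
    (c τ : ℝ → ℝ) (u q : ℝ × ℝ → ℝ)
    (hc : ContDiff ℝ 1 c) (hcpos : ∀ x : ℝ, 0 < c x)
    (hτ : ContDiff ℝ 2 τ) (hτ' : ∀ x : ℝ, deriv τ x = Real.sqrt (c x))
    (hu : ContDiff ℝ 2 u)
    (hwave : ∀ x t : ℝ,
      c x * deriv (fun s => deriv (fun s' => u (x, s')) s) t
        = deriv (fun y => deriv (fun y' => u (y', t)) y) x)
    (hq : ∀ x t : ℝ, q (x, t) = u (x, t + τ x)) :
    ContDiff ℝ 2 q ∧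
    ∀ x t : ℝ,
      deriv (fun y => deriv (fun y' => q (y', t)) y) x
        - 2 * deriv τ x * deriv (fun s => deriv (fun y => q (y, s)) x) t
        - deriv (deriv τ) x * deriv (fun s => q (x, s)) t = 0 := by
  -- basic differentiability facts
  have hu1 : Differentiable ℝ u := hu.differentiable (by norm_num)
  have hDu : ContDiff ℝ 1 (fderiv ℝ u) := hu.fderiv_right (by norm_num)
  have hDud : Differentiable ℝ (fderiv ℝ u) := hDu.differentiable one_ne_zero
  have hτd : Differentiable ℝ τ := hτ.differentiable (by norm_num)
  have hτ'c : ContDiff ℝ 1 (deriv τ) := (contDiff_succ_iff_deriv.mp (show ContDiff ℝ (1+1 : ℕ) τ by exact_mod_cast hτ)).2.2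
  have hτ'd : Differentiable ℝ (deriv τ) := hτ'c.differentiable one_ne_zero
  -- partial derivatives of u
  set v1 : ℝ × ℝ := (1, 0) with hv1
  set v2 : ℝ × ℝ := (0, 1) with hv2
  set ux : ℝ × ℝ → ℝ := fun z => fderiv ℝ u z v1 with hux_def
  set ut : ℝ × ℝ → ℝ := fun z => fderiv ℝ u z v2 with hut_def
  set D2 : ℝ × ℝ → ℝ × ℝ →L[ℝ] ℝ × ℝ →L[ℝ] ℝ := fderiv ℝ (fderiv ℝ u) with hD2
  -- first derivatives of ux, ut
  have hfux : ∀ z : ℝ × ℝ, HasFDerivAt ux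
      ((ContinuousLinearMap.apply ℝ ℝ v1).comp (D2 z)) z := by
    intro z
    exact (ContinuousLinearMap.apply ℝ ℝ v1).hasFDerivAt.comp z (hDud z).hasFDerivAt
  have hfut : ∀ z : ℝ × ℝ, HasFDerivAt ut
      ((ContinuousLinearMap.apply ℝ ℝ v2).comp (D2 z)) z := by
    intro z
    exact (ContinuousLinearMap.apply ℝ ℝ v2).hasFDerivAt.comp z (hDud z).hasFDerivAt
  -- symmetry of second derivatives
  have hsym : ∀ z : ℝ × ℝ, D2 z v1 v2 = D2 z v2 v1 := by
    intro z
    exact second_derivative_symmetric (fun y => (hu1 y).hasFDerivAt)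
      ((hDud z).hasFDerivAt) v1 v2
  -- the vertical-line derivative of u : deriv (fun s' => u (x, s')) s = ut (x, s)
  have hvert : ∀ x s : ℝ, HasDerivAt (fun s' => u (x, s')) (ut (x, s)) s := by
    intro x s
    have h := (hu1 (x, s)).hasFDerivAt.comp_hasDerivAt s
      ((hasDerivAt_const s x).prodMk (hasDerivAt_id s))
    simpa [Function.comp_def, hut_def, hv2] using h
  have hhorz : ∀ x t : ℝ, HasDerivAt (fun y => u (y, t)) (ux (x, t)) x := by
    intro x t
    have h := (hu1 (x, t)).hasFDerivAt.comp_hasDerivAt x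
      ((hasDerivAt_id x).prodMk (hasDerivAt_const x t))
    simpa [Function.comp_def, hux_def, hv1] using h
  -- vertical derivatives of ux and ut
  have hvert_ux : ∀ x s : ℝ, HasDerivAt (fun s' => ux (x, s')) (D2 (x, s) v2 v1) s := by
    intro x s
    have h := (hfux (x, s)).comp_hasDerivAt s
      ((hasDerivAt_const s x).prodMk (hasDerivAt_id s))
    simpa [Function.comp_def, hv2] using h
  have hvert_ut : ∀ x s : ℝ, HasDerivAt (fun s' => ut (x, s')) (D2 (x, s) v2 v2) s := by
    intro x s
    have h := (hfut (x, s)).comp_hasDerivAt s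
      ((hasDerivAt_const s x).prodMk (hasDerivAt_id s))
    simpa [Function.comp_def, hv2] using h
  have hhorz_ux : ∀ x t : ℝ, HasDerivAt (fun y => ux (y, t)) (D2 (x, t) v1 v1) x := by
    intro x t
    have h := (hfux (x, t)).comp_hasDerivAt x
      ((hasDerivAt_id x).prodMk (hasDerivAt_const x t))
    simpa [Function.comp_def, hv1] using h
  -- wave equation in terms of D2
  have hwave' : ∀ z : ℝ × ℝ, c z.1 * D2 z v2 v2 = D2 z v1 v1 := by
    intro z
    obtain ⟨x, t⟩ := z
    have h := hwave x t
    have h1 : (fun s => deriv (fun s' => u (x, s')) s) = fun s => ut (x, s) := by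
      funext s; exact (hvert x s).deriv
    have h2 : (fun y => deriv (fun y' => u (y', t)) y) = fun y => ux (y, t) := by
      funext y; exact (hhorz y t).deriv
    rw [h1, h2, (hvert_ut x t).deriv, (hhorz_ux x t).deriv] at h
    exact h
  -- q as a composition
  have hqfun : q = fun p : ℝ × ℝ => u (p.1, p.2 + τ p.1) := by
    funext p
    have := hq p.1 p.2
    simpa using this
  have hq2 : ContDiff ℝ 2 q := by
    rw [hqfun]
    exact hu.comp (contDiff_fst.prodMk (contDiff_snd.add (hτ.comp contDiff_fst)))
  refine ⟨hq2, fun x t => ?_⟩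
  -- notation for the evaluation point
  set z : ℝ × ℝ := (x, t + τ x) with hz
  set d : ℝ := deriv τ x with hd
  -- q_t
  have hqt : ∀ x₀ t₀ : ℝ, HasDerivAt (fun s => q (x₀, s)) (ut (x₀, t₀ + τ x₀)) t₀ := by
    intro x₀ t₀
    have h := (hu1 (x₀, t₀ + τ x₀)).hasFDerivAt.comp_hasDerivAt t₀
      ((hasDerivAt_const t₀ x₀).prodMk ((hasDerivAt_id t₀).add_const (τ x₀)))
    have h' : HasDerivAt (fun s => u (x₀, s + τ x₀)) (ut (x₀, t₀ + τ x₀)) t₀ := by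
      simpa [Function.comp_def, hut_def, hv2] using h
    exact h'.congr_of_eventuallyEq (Filter.Eventually.of_forall fun s => hq x₀ s)
  -- q_x
  have hqx : ∀ x₀ t₀ : ℝ, HasDerivAt (fun y => q (y, t₀))
      (ux (x₀, t₀ + τ x₀) + deriv τ x₀ * ut (x₀, t₀ + τ x₀)) x₀ := by
    intro x₀ t₀
    have hcurve : HasDerivAt (fun y => (y, t₀ + τ y)) ((1 : ℝ), deriv τ x₀) x₀ := by
      simpa using (hasDerivAt_id x₀).prodMk ((hasDerivAt_const x₀ t₀).add (hτd x₀).hasDerivAt)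
    have h := (hu1 (x₀, t₀ + τ x₀)).hasFDerivAt.comp_hasDerivAt x₀ hcurve
    have h' : HasDerivAt (fun y => u (y, t₀ + τ y))
        (ux (x₀, t₀ + τ x₀) + deriv τ x₀ * ut (x₀, t₀ + τ x₀)) x₀ := by
      have hval : fderiv ℝ u (x₀, t₀ + τ x₀) ((1 : ℝ), deriv τ x₀)
          = ux (x₀, t₀ + τ x₀) + deriv τ x₀ * ut (x₀, t₀ + τ x₀) := by
        rw [clm_slant]
        simp [hux_def, hut_def, hv1, hv2]
      rw [← hval]
      simpa [Function.comp_def] using h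
    exact h'.congr_of_eventuallyEq (Filter.Eventually.of_forall fun y => hq y t₀)
  -- derivative of ux along the slanted curve (x-direction)
  have hux_curve : HasDerivAt (fun y => ux (y, t + τ y))
      (D2 z v1 v1 + d * (D2 z v2 v1)) x := by
    have hcurve : HasDerivAt (fun y => (y, t + τ y)) ((1 : ℝ), d) x := by
      simpa [hd] using (hasDerivAt_id x).prodMk ((hasDerivAt_const x t).add (hτd x).hasDerivAt)
    have h := (hfux z).comp_hasDerivAt x hcurve
    have hval : ((ContinuousLinearMap.apply ℝ ℝ v1).comp (D2 z)) ((1 : ℝ), d)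
        = D2 z v1 v1 + d * D2 z v2 v1 := by
      rw [ContinuousLinearMap.comp_apply, clm_slant (D2 z) d]
      simp [hv1, hv2]
    rw [← hval]
    simpa [Function.comp_def, hz] using h
  have hut_curve : HasDerivAt (fun y => ut (y, t + τ y))
      (D2 z v1 v2 + d * (D2 z v2 v2)) x := by
    have hcurve : HasDerivAt (fun y => (y, t + τ y)) ((1 : ℝ), d) x := by
      simpa [hd] using (hasDerivAt_id x).prodMk ((hasDerivAt_const x t).add (hτd x).hasDerivAt)
    have h := (hfut z).comp_hasDerivAt x hcurve
    have hval : ((ContinuousLinearMap.apply ℝ ℝ v2).comp (D2 z)) ((1 : ℝ), d)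
        = D2 z v1 v2 + d * D2 z v2 v2 := by
      rw [ContinuousLinearMap.comp_apply, clm_slant (D2 z) d]
      simp [hv1, hv2]
    rw [← hval]
    simpa [Function.comp_def, hz] using h
  -- derivatives of ux, ut along the vertical curve s ↦ (x, s + τ x)
  have hux_vcurve : HasDerivAt (fun s => ux (x, s + τ x)) (D2 z v2 v1) t := by
    have h := (hfux z).comp_hasDerivAt t
      ((hasDerivAt_const t x).prodMk ((hasDerivAt_id t).add_const (τ x)))
    simpa [Function.comp_def, hz, hv2] using h
  have hut_vcurve : HasDerivAt (fun s => ut (x, s + τ x)) (D2 z v2 v2) t := by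
    have h := (hfut z).comp_hasDerivAt t
      ((hasDerivAt_const t x).prodMk ((hasDerivAt_id t).add_const (τ x)))
    simpa [Function.comp_def, hz, hv2] using h
  -- q_xx
  have hqxx : deriv (fun y => deriv (fun y' => q (y', t)) y) x
      = D2 z v1 v1 + d * D2 z v2 v1
        + (deriv (deriv τ) x * ut z + d * (D2 z v1 v2 + d * D2 z v2 v2)) := by
    have heq : (fun y => deriv (fun y' => q (y', t)) y)
        = fun y => ux (y, t + τ y) + deriv τ y * ut (y, t + τ y) := by
      funext y; exact (hqx y t).deriv
    rw [heq]
    have h2 : HasDerivAt (fun y => deriv τ y * ut (y, t + τ y))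
        (deriv (deriv τ) x * ut z + d * (D2 z v1 v2 + d * D2 z v2 v2)) x := by
      have := ((hτ'd x).hasDerivAt.mul hut_curve)
      exact this
    exact (hux_curve.add h2).deriv
  -- q_xt
  have hqxt : deriv (fun s => deriv (fun y => q (y, s)) x) t
      = D2 z v2 v1 + d * D2 z v2 v2 := by
    have heq : (fun s => deriv (fun y => q (y, s)) x)
        = fun s => ux (x, s + τ x) + d * ut (x, s + τ x) := by
      funext s; exact (hqx x s).deriv
    rw [heq]
    exact (hux_vcurve.add ((hut_vcurve.const_mul d))).deriv
  -- q_t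
  have hqt' : deriv (fun s => q (x, s)) t = ut z := (hqt x t).deriv
  -- (τ')² = c
  have hd2 : d ^ 2 = c x := by
    rw [hd, hτ' x, sq, Real.mul_self_sqrt (hcpos x).le]
  have hw := hwave' z
  have hzx : z.1 = x := rfl
  rw [hzx] at hw
  have hs := hsym z
  rw [hqxx, hqxt, hqt', hs, ← hw, ← hd2]
  ring
end

section
/- Let c : ℝ → ℝ be continuously differentiable with c(x) > 0 for all x, let τ : ℝ → ℝ be twice continuously differentiable with τ'(x) = √(c(x)) for all x, and let u : ℝ × ℝ → ℝ be twice continuously differentiable and satisfy c(x)·∂ₜₜu(x,t) = ∂ₓₓu(x,t) for all (x,t) ∈ ℝ². Define q(x,t) = u(x, t + τ(x)) and assume in addition that q(x,0) = 1/(2·c(x)^{1/4}) for all x ∈ ℝ. Then for all (x,t) ∈ ℝ²: ∂ₓₓq(x,t) − ∂ₜ∂ₓq(x,t)/(2·q(x,0)²) + ∂ₜq(x,t)·(d/dx)[q(x,0)]/(2·q(x,0)³) = 0. -/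
set_option maxHeartbeats 1000000 in
/-- Equation (3.6): the nonlinear PDE with nonlocal terms satisfied by
`q(x,t) = u(x, t + τ(x))` when `τ' = √c`, `c·u_tt = u_xx` and
`q(x,0) = 1/(2·c(x)^{1/4})`. -/
theorem nonlinear_nonlocal_pde
    (c τ : ℝ → ℝ) (u q : ℝ × ℝ → ℝ)
    (hc : ContDiff ℝ 1 c) (hcpos : ∀ x : ℝ, 0 < c x)
    (hτ : ContDiff ℝ 2 τ) (hτ' : ∀ x : ℝ, deriv τ x = Real.sqrt (c x))
    (hu : ContDiff ℝ 2 u)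
    (hwave : ∀ x t : ℝ,
      c x * deriv (fun s => deriv (fun s' => u (x, s')) s) t
        = deriv (fun y => deriv (fun y' => u (y', t)) y) x)
    (hq : ∀ x t : ℝ, q (x, t) = u (x, t + τ x))
    (hq0 : ∀ x : ℝ, q (x, 0) = 1 / (2 * (c x) ^ ((1 : ℝ) / 4))) :
    ∀ x t : ℝ,
      deriv (fun y => deriv (fun y' => q (y', t)) y) x
        - deriv (fun s => deriv (fun y => q (y, s)) x) t / (2 * (q (x, 0)) ^ 2)
        + deriv (fun s => q (x, s)) t * deriv (fun y => q (y, 0)) x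
            / (2 * (q (x, 0)) ^ 3) = 0 := by
  intro x t
  have hu' : Differentiable ℝ u := hu.differentiable (by norm_num)
  have hDu : Differentiable ℝ (fderiv ℝ u) :=
    (hu.fderiv_right (m := 1) (by norm_num)).differentiable one_ne_zero
  have hτd : Differentiable ℝ τ := hτ.differentiable (by norm_num)
  have hτ2 : Differentiable ℝ (deriv τ) := by
    have := (contDiff_succ_iff_deriv (n := 1) (f := τ)).mp (by exact_mod_cast hτ)
    exact this.2.2.differentiable one_ne_zero
  have hcd : Differentiable ℝ c := hc.differentiable one_ne_zero
  -- generic chain-rule helpers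
  have key1 : ∀ {γ : ℝ → ℝ × ℝ} {γ' : ℝ × ℝ} {s : ℝ}, HasDerivAt γ γ' s →
      HasDerivAt (fun r => u (γ r)) (fderiv ℝ u (γ s) γ') s := by
    intro γ γ' s h
    exact ((hu' (γ s)).hasFDerivAt).comp_hasDerivAt s h
  have key2 : ∀ {γ : ℝ → ℝ × ℝ} {γ' : ℝ × ℝ} {s : ℝ}, HasDerivAt γ γ' s →
      HasDerivAt (fun r => fderiv ℝ u (γ r)) (fderiv ℝ (fderiv ℝ u) (γ s) γ') s := by
    intro γ γ' s h
    exact ((hDu (γ s)).hasFDerivAt).comp_hasDerivAt s h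
  set p : ℝ × ℝ := (x, t + τ x) with hp
  set T : ℝ := deriv τ x with hT
  set T2 : ℝ := deriv (deriv τ) x with hT2def
  set D1 := fderiv ℝ u with hD1
  set D2 := fderiv ℝ (fderiv ℝ u) with hD2
  -- paths
  have path1 : ∀ y : ℝ, HasDerivAt (fun r => (r, t + τ r)) ((1 : ℝ), deriv τ y) y := by
    intro y
    simpa using (hasDerivAt_id y).prodMk ((hasDerivAt_const y t).add (hτd y).hasDerivAt)
  have path2 : ∀ s : ℝ, HasDerivAt (fun r => (x, r + τ x)) ((0 : ℝ), (1 : ℝ)) s := by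
    intro s
    simpa using (hasDerivAt_const s x).prodMk ((hasDerivAt_id s).add (hasDerivAt_const s (τ x)))
  -- inner x-derivative of q
  have qx : ∀ s y : ℝ, deriv (fun y' => q (y', s)) y = D1 (y, s + τ y) (1, deriv τ y) := by
    intro s y
    have h : (fun y' => q (y', s)) = fun y' => u (y', s + τ y') := funext fun y' => hq y' s
    rw [h]
    have path : HasDerivAt (fun r => (r, s + τ r)) ((1 : ℝ), deriv τ y) y := by
      simpa using (hasDerivAt_id y).prodMk ((hasDerivAt_const y s).add (hτd y).hasDerivAt)
    exact (key1 path).deriv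
  -- Term 1 : q_xx
  have e1 : deriv (fun y => deriv (fun y' => q (y', t)) y) x
      = D2 p (1, T) (1, T) + D1 p (0, T2) := by
    have h : (fun y => deriv (fun y' => q (y', t)) y)
        = fun y => D1 (y, t + τ y) (1, deriv τ y) := funext fun y => qx t y
    rw [h]
    have hB : HasDerivAt (fun y => D1 (y, t + τ y)) (D2 p (1, T)) x := key2 (path1 x)
    have hv : HasDerivAt (fun y => ((1 : ℝ), deriv τ y)) ((0 : ℝ), T2) x :=
      (hasDerivAt_const x (1 : ℝ)).prodMk (hτ2 x).hasDerivAt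
    simpa using (hB.clm_apply hv).deriv
  -- Term 2 : q_xt
  have e2 : deriv (fun s => deriv (fun y => q (y, s)) x) t = D2 p (0, 1) (1, T) := by
    have h : (fun s => deriv (fun y => q (y, s)) x)
        = fun s => D1 (x, s + τ x) (1, T) := funext fun s => qx s x
    rw [h]
    have hB : HasDerivAt (fun s => D1 (x, s + τ x)) (D2 p (0, 1)) t := key2 (path2 t)
    simpa using (hB.clm_apply (hasDerivAt_const t ((1 : ℝ), T))).deriv
  -- Term 3 : q_t
  have e3 : deriv (fun s => q (x, s)) t = D1 p (0, 1) := by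
    have h : (fun s => q (x, s)) = fun s => u (x, s + τ x) := funext fun s => hq x s
    rw [h]
    exact (key1 (path2 t)).deriv
  -- wave equation at p
  have utt : deriv (fun s => deriv (fun s' => u (x, s')) s) (t + τ x) = D2 p (0, 1) (0, 1) := by
    have h : (fun s => deriv (fun s' => u (x, s')) s) = fun s => D1 (x, s) (0, 1) := by
      funext s
      exact (key1 ((hasDerivAt_const s x).prodMk (hasDerivAt_id s))).deriv
    rw [h]
    have hB : HasDerivAt (fun s => D1 (x, s)) (D2 p (0, 1)) (t + τ x) :=
      key2 ((hasDerivAt_const (t + τ x) x).prodMk (hasDerivAt_id (t + τ x)))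
    simpa using (hB.clm_apply (hasDerivAt_const (t + τ x) ((0 : ℝ), (1 : ℝ)))).deriv
  have uxx : deriv (fun y => deriv (fun y' => u (y', t + τ x)) y) x = D2 p (1, 0) (1, 0) := by
    have h : (fun y => deriv (fun y' => u (y', t + τ x)) y)
        = fun y => D1 (y, t + τ x) (1, 0) := by
      funext y
      exact (key1 ((hasDerivAt_id y).prodMk (hasDerivAt_const y (t + τ x)))).deriv
    rw [h]
    have hB : HasDerivAt (fun y => D1 (y, t + τ x)) (D2 p (1, 0)) x :=
      key2 ((hasDerivAt_id x).prodMk (hasDerivAt_const x (t + τ x)))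
    simpa using (hB.clm_apply (hasDerivAt_const x ((1 : ℝ), (0 : ℝ)))).deriv
  have wave : c x * D2 p (0, 1) (0, 1) = D2 p (1, 0) (1, 0) := by
    rw [← utt, ← uxx]; exact hwave x (t + τ x)
  -- symmetry of second derivative
  have symm : D2 p (1, 0) (0, 1) = D2 p (0, 1) (1, 0) :=
    second_derivative_symmetric (fun y => (hu' y).hasFDerivAt) ((hDu p).hasFDerivAt) _ _
  -- scalar facts
  set a : ℝ := c x with ha
  have hapos : 0 < a := hcpos x
  set b : ℝ := a ^ ((1 : ℝ) / 4) with hb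
  have hbpos : 0 < b := Real.rpow_pos_of_pos hapos _
  have hb4 : b ^ 4 = a := by
    rw [hb, ← Real.rpow_natCast (a ^ ((1 : ℝ) / 4)) 4, ← Real.rpow_mul hapos.le]
    norm_num
  have hTval : T = Real.sqrt a := hτ' x
  have hTb : T = b ^ 2 := by
    rw [hTval, ← hb4, show b ^ 4 = (b ^ 2) ^ 2 by ring]
    exact Real.sqrt_sq (by positivity)
  set a' : ℝ := deriv c x with ha'
  have hT2val : T2 = a' / (2 * T) := by
    have h : deriv τ = fun y => Real.sqrt (c y) := funext hτ'
    rw [hT2def, h]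
    have h2 := ((Real.hasDerivAt_sqrt (ne_of_gt hapos)).comp x (hcd x).hasDerivAt).deriv
    rw [show (fun y => Real.sqrt (c y)) = (fun x => Real.sqrt x) ∘ c from rfl, h2, hTval]
    ring
  -- derivative of q(·,0)
  have hfb : HasDerivAt (fun y => (c y) ^ ((1 : ℝ) / 4))
      ((1 / 4) * a ^ ((1 : ℝ) / 4 - 1) * a') x := by
    have := (Real.hasDerivAt_rpow_const (p := (1 : ℝ) / 4)
      (Or.inl (ne_of_gt hapos))).comp x (hcd x).hasDerivAt
    simpa [Function.comp_def, ha', mul_comm, mul_assoc, mul_left_comm] using this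
  have hexp : a ^ ((1 : ℝ) / 4 - 1) = 1 / b ^ 3 := by
    have hprod : a ^ ((1 : ℝ) / 4 - 1) * b ^ 3 = 1 := by
      rw [hb, ← Real.rpow_natCast (a ^ ((1 : ℝ) / 4)) 3, ← Real.rpow_mul hapos.le,
        ← Real.rpow_add hapos]
      norm_num
    rw [eq_div_iff (by positivity : b ^ 3 ≠ 0)]
    exact hprod
  have e4 : deriv (fun y => q (y, 0)) x = -(a' / (8 * b ^ 5)) := by
    have h : (fun y => q (y, 0)) = fun y => 1 / (2 * (c y) ^ ((1 : ℝ) / 4)) :=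
      funext fun y => hq0 y
    rw [h]
    have hden : HasDerivAt (fun y => 2 * (c y) ^ ((1 : ℝ) / 4))
        (2 * ((1 / 4) * a ^ ((1 : ℝ) / 4 - 1) * a')) x := hfb.const_mul 2
    have hne : 2 * (c x) ^ ((1 : ℝ) / 4) ≠ 0 := by positivity
    have := ((hasDerivAt_const x (1 : ℝ)).div hden hne).deriv
    simp only [Pi.div_def] at this
    rw [this, hexp]
    have : (c x) ^ ((1 : ℝ) / 4) = b := rfl
    rw [this]
    field_simp
    ring
  -- q(x,0)
  have hq0x : q (x, 0) = 1 / (2 * b) := hq0 x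
  -- bilinear expansions
  have hvec : ((1 : ℝ), T) = ((1 : ℝ), (0 : ℝ)) + T • ((0 : ℝ), (1 : ℝ)) := by
    simp [Prod.ext_iff]
  have exp1 : D2 p (1, T) (1, T)
      = D2 p (1, 0) (1, 0) + T * D2 p (1, 0) (0, 1)
        + T * D2 p (0, 1) (1, 0) + T ^ 2 * D2 p (0, 1) (0, 1) := by
    rw [hvec]
    simp only [map_add, map_smul, ContinuousLinearMap.add_apply,
      ContinuousLinearMap.smul_apply, smul_eq_mul]
    ring
  have exp2 : D2 p (0, 1) (1, T)
      = D2 p (0, 1) (1, 0) + T * D2 p (0, 1) (0, 1) := by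
    rw [hvec]
    simp only [map_add, map_smul, smul_eq_mul]
  have exp3 : D1 p (0, T2) = T2 * D1 p (0, 1) := by
    have h : ((0 : ℝ), T2) = T2 • ((0 : ℝ), (1 : ℝ)) := by simp [Prod.ext_iff]
    rw [h, map_smul, smul_eq_mul]
  -- final assembly
  rw [e1, e2, e3, e4, hq0x, exp1, exp2, exp3]
  rw [hTb] at *
  set S11 := D2 p (1, 0) (1, 0)
  set S12 := D2 p (1, 0) (0, 1)
  set S21 := D2 p (0, 1) (1, 0)
  set S22 := D2 p (0, 1) (0, 1)
  set D01 := D1 p (0, 1)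
  have hwave' : b ^ 4 * S22 = S11 := by rw [hb4]; exact wave
  rw [hT2val]
  field_simp
  linear_combination (-(16:ℝ) * b ^ 2) * hwave' + (16 * b ^ 4) * symm
end
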